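/- arXiv:1907.08093 — 2 statements merged into one kernel-verified Lean document; each statement's English description precedes it below -/
import Mathlib

section
/- Let G be a connected graph, X a set of vertices, and a, b two distinct vertices in X. If every vertex v in the open neighborhood N(X) = N[X] \ X satisfies dist(v,a) = dist(v,b), then every vertex v outside X satisfies dist(v,a) = dist(v,b). -/
private lemma boundary_lemma {V : Type*} (G : SimpleGraph V) (hG : G.Connected) (X : Set V) :
    ∀ {v a : V} (p : G.Walk v a), v ∉ X → a ∈ X →
    ∃ w, w ∉ X ∧ (∃ x ∈ X, G.Adj w x) ∧ G.dist v w + G.dist w a ≤ p.length := by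
  intro v c p
  induction p with
  | nil => intro hv haX; exact absurd haX hv
  | @cons v u a hadj q ih =>
    have hvu := hadj
    intro hv haX
    by_cases hu : u ∈ X
    · refine ⟨v, hv, ⟨u, hu, hvu⟩, ?_⟩
      simp only [SimpleGraph.dist_self, zero_add, SimpleGraph.Walk.length_cons]
      calc G.dist v a ≤ (SimpleGraph.Walk.cons hvu q).length :=
            SimpleGraph.dist_le _
        _ = q.length + 1 := by simp
    · obtain ⟨w, hw, hwx, hle⟩ := ih hu haX
      refine ⟨w, hw, hwx, ?_⟩
      have h1 : G.dist v w ≤ 1 + G.dist u w := by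
        calc G.dist v w ≤ G.dist v u + G.dist u w :=
              (hG.dist_triangle)
          _ ≤ 1 + G.dist u w := by
              have : G.dist v u ≤ 1 := by
                calc G.dist v u ≤ hvu.toWalk.length :=
                      SimpleGraph.dist_le _
                  _ = 1 := by simp
              omega
      simp only [SimpleGraph.Walk.length_cons]
      omega

private lemma half {V : Type*} (G : SimpleGraph V) (hG : G.Connected)
    (X : Set V) (a b : V) (ha : a ∈ X)
    (h : ∀ v, v ∉ X → (∃ x ∈ X, G.Adj v x) → G.dist v a = G.dist v b) :
    ∀ v, v ∉ X → G.dist v b ≤ G.dist v a := by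
  intro v hv
  obtain ⟨p, hp⟩ := hG.exists_walk_length_eq_dist v a
  obtain ⟨w, hw, hwx, hle⟩ := boundary_lemma G hG X p hv ha
  rw [hp] at hle
  have hwb := h w hw hwx
  calc G.dist v b ≤ G.dist v w + G.dist w b := hG.dist_triangle
    _ = G.dist v w + G.dist w a := by rw [hwb]
    _ ≤ G.dist v a := hle

theorem surrounded_not_resolved {V : Type*} (G : SimpleGraph V) (hG : G.Connected)
    (X : Set V) (a b : V) (ha : a ∈ X) (hb : b ∈ X) (hab : a ≠ b)
    (h : ∀ v, v ∉ X → (∃ x ∈ X, G.Adj v x) → G.dist v a = G.dist v b) :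
    ∀ v, v ∉ X → G.dist v a = G.dist v b := by
  intro v hv
  exact le_antisymm
    (half G hG X b a hb (fun u hu hux => (h u hu hux).symm) v hv)
    (half G hG X a b ha h v hv)
end

section
/- Let G be a connected graph and let {a,b} be a pair of vertices. If X ⊆ V(G) contains a and b, and no vertex of N(X) resolves {a,b}, then any resolving set of G must contain at least one vertex of X. -/
private lemma walk_boundary {V : Type*} (G : SimpleGraph V) (hG : G.Connected)
    (X : Set V) (a : V) (ha : a ∈ X) :
    ∀ {w : V} (p : G.Walk w a), w ∉ X →
      ∃ u, u ∉ X ∧ (∃ x ∈ X, G.Adj u x) ∧ G.dist w u + G.dist u a ≤ p.length := by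
  intro w p
  induction p with
  | nil =>
    intro hw
    exact absurd ha hw
  | @cons w v a hadj q ih =>
    intro hw
    by_cases hv : v ∈ X
    · refine ⟨w, hw, ⟨v, hv, hadj⟩, ?_⟩
      simpa [SimpleGraph.dist_self] using SimpleGraph.dist_le (SimpleGraph.Walk.cons hadj q)
    · obtain ⟨u, hu, hub, hle⟩ := ih ha hv
      refine ⟨u, hu, hub, ?_⟩
      have h1 : G.dist w u ≤ 1 + G.dist v u := by
        have := hG.dist_triangle (u := w) (v := v) (w := u)
        have h2 : G.dist w v ≤ 1 := (SimpleGraph.dist_eq_one_iff_adj.mpr hadj).le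
        omega
      simp only [SimpleGraph.Walk.length_cons]
      omega

theorem resolving_set_meets_surrounded {V : Type*} (G : SimpleGraph V) (hG : G.Connected)
    (X : Set V) (a b : V) (ha : a ∈ X) (hb : b ∈ X) (hab : a ≠ b)
    (h : ∀ w, w ∉ X → (∃ x ∈ X, G.Adj w x) → G.dist w a = G.dist w b)
    (S : Set V) (hS : ∀ x y : V, x ≠ y → ∃ s ∈ S, G.dist s x ≠ G.dist s y) :
    ∃ x ∈ S, x ∈ X := by
  have key : ∀ w, w ∉ X → G.dist w a = G.dist w b := by
    have half : ∀ c d : V, c ∈ X → d ∈ X →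
        (∀ w, w ∉ X → (∃ x ∈ X, G.Adj w x) → G.dist w c = G.dist w d) →
        ∀ w, w ∉ X → G.dist w d ≤ G.dist w c := by
      intro c d hc hd hcd w hw
      obtain ⟨p, hp⟩ := (hG w c).exists_walk_length_eq_dist
      obtain ⟨u, hu, hub, hle⟩ := walk_boundary G hG X c hc p hw
      have hdb : G.dist w d ≤ G.dist w u + G.dist u d := hG.dist_triangle
      have := hcd u hu hub
      omega
    intro w hw
    have h1 := half a b ha hb h w hw
    have h2 := half b a hb ha (fun w hw hwx => (h w hw hwx).symm) w hw
    omega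
  obtain ⟨s, hsS, hs⟩ := hS a b hab
  refine ⟨s, hsS, ?_⟩
  by_contra hsX
  exact hs (key s hsX)
end
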